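/- Let P_1 and P_2 be orthogonal projections on R^d whose product Q = P_1 P_2 P_1 has spectral decomposition with eigenvalues λ_i ∈ [0,1]. Then for every n ≥ 1, ||(I − P_1)(P_2 P_1)^n|| equals max_i √(λ_i^{2n-1}(1 − λ_i)). -/

import Mathlib

lemma proj_pow_prod {R : Type*} [Ring R] {P₁ P₂ : R} (h1 : P₁*P₁ = P₁) (h2 : P₂*P₂ = P₂)
    (m : ℕ) :
    (P₁*P₂)^(m+1) * (P₂*P₁)^(m+1) = (P₁*P₂*P₁)^(2*m+1) ∧
    (P₁*P₂)^(m+1) * (P₁ * (P₂*P₁)^(m+1)) = (P₁*P₂*P₁)^(2*m+2) := by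
  set Q := P₁*P₂*P₁ with hQ
  have hP₁Q : P₁ * Q = Q := by
    rw [hQ, ← mul_assoc P₁ (P₁*P₂) P₁, ← mul_assoc P₁ P₁ P₂, h1]
  have hQP₁ : Q * P₁ = Q := by
    rw [hQ, mul_assoc (P₁*P₂) P₁ P₁, h1]
  have hQQ' : Q*(P₂*P₁) = Q*Q := by
    conv_lhs => rw [← hQP₁, mul_assoc Q P₁ (P₂*P₁), ← mul_assoc P₁ P₂ P₁, ← hQ]
  have hPQ : (P₁*P₂)*Q = Q*Q := by
    conv_lhs => rw [← hP₁Q, ← mul_assoc (P₁*P₂) P₁ Q, ← hQ]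
  have hL : ∀ k : ℕ, (P₁*P₂) * Q^(k+1) = Q^(k+2) := by
    intro k
    rw [pow_succ' Q k, ← mul_assoc, hPQ, mul_assoc, ← pow_succ' Q k, ← pow_succ' Q (k+1)]
  have hR : ∀ k : ℕ, Q^(k+1)*(P₂*P₁) = Q^(k+2) := by
    intro k
    rw [pow_succ Q k, mul_assoc, hQQ', ← mul_assoc, ← pow_succ Q k, ← pow_succ Q (k+1)]
  induction m with
  | zero =>
      constructor
      · rw [pow_one, pow_one, pow_one, mul_assoc P₁ P₂ (P₂*P₁), ← mul_assoc P₂ P₂ P₁, h2,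
          ← mul_assoc P₁ P₂ P₁]
      · rw [pow_one, pow_one, ← mul_assoc (P₁*P₂) P₁ (P₂*P₁), ← hQ, hQQ', pow_two]
  | succ m ih =>
      obtain ⟨ih1, ih2⟩ := ih
      have e1 : (P₁*P₂)^(m+2) * (P₂*P₁)^(m+2)
          = (P₁*P₂) * ((P₁*P₂)^(m+1) * (P₂*P₁)^(m+1)) * (P₂*P₁) := by
        rw [pow_succ' (P₁*P₂) (m+1), pow_succ (P₂*P₁) (m+1)]
        noncomm_ring
      have e2 : (P₁*P₂)^(m+2) * (P₁ * (P₂*P₁)^(m+2))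
          = (P₁*P₂) * ((P₁*P₂)^(m+1) * (P₁ * (P₂*P₁)^(m+1))) * (P₂*P₁) := by
        rw [pow_succ' (P₁*P₂) (m+1), pow_succ (P₂*P₁) (m+1)]
        noncomm_ring
      constructor
      · rw [e1, ih1, hL (2*m), hR (2*m+1)]
        exact congrArg (Q ^ ·) (by omega)
      · rw [e2, ih2, hL (2*m+1), hR (2*m+2)]
        exact congrArg (Q ^ ·) (by omega)

open Finset in
lemma opnorm_of_eigenbasis {d : ℕ}
    (T : EuclideanSpace ℝ (Fin d) →L[ℝ] EuclideanSpace ℝ (Fin d))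
    (μ : Fin d → ℝ)
    (b : OrthonormalBasis (Fin d) ℝ (EuclideanSpace ℝ (Fin d)))
    (h : ∀ i, T (b i) = μ i • b i)
    (hne : (Finset.univ : Finset (Fin d)).Nonempty) :
    ‖T‖ = Finset.univ.sup' hne (fun i => |μ i|) := by
  obtain ⟨i₀, -⟩ := id hne
  set M := Finset.univ.sup' hne fun i => |μ i| with hM
  have habs : ∀ i, |μ i| ≤ M := fun i =>
    Finset.le_sup' (fun j => |μ j|) (Finset.mem_univ i)
  have hM0 : 0 ≤ M := le_trans (abs_nonneg (μ i₀)) (habs i₀)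
  apply le_antisymm
  · apply ContinuousLinearMap.opNorm_le_bound _ hM0
    intro x
    have hTx : T x = ∑ j, (μ j * b.repr x j) • b j := by
      conv_lhs => rw [← b.sum_repr x]
      rw [map_sum]
      refine Finset.sum_congr rfl fun j _ => ?_
      rw [ContinuousLinearMap.map_smul, h j, smul_smul, mul_comm]
    have hrepr : ∀ i, b.repr (T x) i = μ i * b.repr x i := by
      intro i
      rw [hTx, map_sum]
      have : ∀ j, (b.repr ((μ j * b.repr x j) • b j)) i
          = (μ j * b.repr x j) * (EuclideanSpace.single j (1:ℝ)) i := by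
        intro j
        rw [map_smul, b.repr_self]
        rfl
      rw [WithLp.ofLp_sum, Finset.sum_apply]
      simp_rw [this, EuclideanSpace.single_apply]
      simp [Finset.sum_ite_eq' Finset.univ i]
    have hnorm : ‖T x‖ ^ 2 ≤ M ^ 2 * ‖x‖ ^ 2 := by
      have h1 : ‖T x‖ ^ 2 = ∑ i, (μ i * b.repr x i) ^ 2 := by
        rw [← b.repr.norm_map (T x)]
        rw [EuclideanSpace.norm_eq, Real.sq_sqrt (by positivity)]
        refine Finset.sum_congr rfl fun i _ => ?_
        rw [hrepr i, Real.norm_eq_abs, sq_abs]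
      have h2 : ‖x‖ ^ 2 = ∑ i, (b.repr x i) ^ 2 := by
        rw [← b.repr.norm_map x, EuclideanSpace.norm_eq, Real.sq_sqrt (by positivity)]
        exact Finset.sum_congr rfl fun i _ => by rw [Real.norm_eq_abs, sq_abs]
      rw [h1, h2, Finset.mul_sum]
      refine Finset.sum_le_sum fun i _ => ?_
      rw [mul_pow]
      have : μ i ^ 2 ≤ M ^ 2 := by
        rw [← sq_abs (μ i)]
        exact pow_le_pow_left₀ (abs_nonneg _) (habs i) 2
      nlinarith [sq_nonneg (b.repr x i)]
    have := Real.sqrt_le_sqrt hnorm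
    rwa [Real.sqrt_sq (norm_nonneg _), show M ^ 2 * ‖x‖ ^ 2 = (M * ‖x‖)^2 by ring,
      Real.sqrt_sq (by positivity)] at this
  · apply Finset.sup'_le
    intro i _
    have h1 : ‖T (b i)‖ = |μ i| := by
      rw [h i, norm_smul, Real.norm_eq_abs, b.orthonormal.1 i, mul_one]
    calc |μ i| = ‖T (b i)‖ := h1.symm
      _ ≤ ‖T‖ * ‖b i‖ := T.le_opNorm _
      _ = ‖T‖ := by rw [b.orthonormal.1 i, mul_one]


theorem residual_opnorm_eq_max_eigenvalue_expr (d : ℕ) (hd : 0 < d)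
    (P₁ P₂ : EuclideanSpace ℝ (Fin d) →L[ℝ] EuclideanSpace ℝ (Fin d))
    (hsa₁ : IsSelfAdjoint P₁) (hidem₁ : P₁ * P₁ = P₁)
    (hsa₂ : IsSelfAdjoint P₂) (hidem₂ : P₂ * P₂ = P₂)
    (lam : Fin d → ℝ)
    (b : OrthonormalBasis (Fin d) ℝ (EuclideanSpace ℝ (Fin d)))
    (heig : ∀ i, (P₁ * P₂ * P₁) (b i) = lam i • b i)
    (hlam : ∀ i, lam i ∈ Set.Icc (0 : ℝ) 1)
    (n : ℕ) (hn : 1 ≤ n) :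
    ‖((1 : EuclideanSpace ℝ (Fin d) →L[ℝ] EuclideanSpace ℝ (Fin d)) - P₁)
        * (P₂ * P₁) ^ n‖
      = Finset.univ.sup'
          (Finset.univ_nonempty_iff.mpr (Fin.pos_iff_nonempty.mp hd))
          (fun i => Real.sqrt (lam i ^ (2 * n - 1) * (1 - lam i))) := by
  obtain ⟨m, rfl⟩ : ∃ m, n = m + 1 := ⟨n - 1, by omega⟩
  set n := m + 1 with hn'
  have hne : (Finset.univ : Finset (Fin d)).Nonempty :=
    Finset.univ_nonempty_iff.mpr (Fin.pos_iff_nonempty.mp hd)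
  set Q := P₁ * P₂ * P₁ with hQ
  set T := ((1 : EuclideanSpace ℝ (Fin d) →L[ℝ] EuclideanSpace ℝ (Fin d)) - P₁)
      * (P₂ * P₁) ^ n with hT
  -- star T * T = Q ^ (2m+1) - Q ^ (2m+2)
  have hstarT : star T = (P₁ * P₂) ^ n * (1 - P₁) := by
    rw [hT, star_mul, star_pow, star_mul, hsa₁.star_eq, hsa₂.star_eq]
    congr 1
    rw [show star ((1 : EuclideanSpace ℝ (Fin d) →L[ℝ] EuclideanSpace ℝ (Fin d)) - P₁)
        = ContinuousLinearMap.adjoint (1 - P₁) from rfl, map_sub]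
    exact congrArg₂ Sub.sub (star_one _) hsa₁.star_eq
  have hcompl : (1 - P₁) * (1 - P₁)
      = (1 : EuclideanSpace ℝ (Fin d) →L[ℝ] EuclideanSpace ℝ (Fin d)) - P₁ := by
    rw [mul_sub, sub_mul, sub_mul, mul_one, one_mul, hidem₁]
    abel
  have hprod := proj_pow_prod hidem₁ hidem₂ m
  have hS : star T * T = Q ^ (2*m+1) - Q ^ (2*m+2) := by
    calc star T * T
        = (P₁ * P₂) ^ n * (((1 - P₁) * (1 - P₁)) * (P₂ * P₁) ^ n) := by
          rw [hstarT, hT]; noncomm_ring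
      _ = (P₁ * P₂) ^ n * ((1 - P₁) * (P₂ * P₁) ^ n) := by rw [hcompl]
      _ = (P₁ * P₂) ^ n * (P₂ * P₁) ^ n
          - (P₁ * P₂) ^ n * (P₁ * (P₂ * P₁) ^ n) := by
          rw [sub_mul, one_mul, mul_sub]
      _ = Q ^ (2*m+1) - Q ^ (2*m+2) := by rw [hprod.1, hprod.2]
  -- eigenvalues of star T * T
  have hQpow : ∀ (k : ℕ) i, (Q ^ k) (b i) = (lam i ^ k) • b i := by
    intro k i
    induction k with
    | zero => simp
    | succ k ih =>
        rw [pow_succ' Q k, ContinuousLinearMap.mul_apply, ih,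
          map_smul, heig i, smul_smul, ← pow_succ]
  have hμ : ∀ i, (star T * T) (b i)
      = (lam i ^ (2*m+1) - lam i ^ (2*m+2)) • b i := by
    intro i
    rw [hS, ContinuousLinearMap.sub_apply, hQpow, hQpow, sub_smul]
  have hSnorm : ‖star T * T‖
      = Finset.univ.sup' hne (fun i => |lam i ^ (2*m+1) - lam i ^ (2*m+2)|) :=
    opnorm_of_eigenbasis _ _ b hμ hne
  have hTT : ‖T‖ * ‖T‖
      = Finset.univ.sup' hne (fun i => |lam i ^ (2*m+1) - lam i ^ (2*m+2)|) := by
    rw [← CStarRing.norm_star_mul_self, hSnorm]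
  have hTn : ‖T‖ = Real.sqrt
      (Finset.univ.sup' hne (fun i => |lam i ^ (2*m+1) - lam i ^ (2*m+2)|)) := by
    rw [← hTT, Real.sqrt_mul_self (norm_nonneg T)]
  rw [hTn, Finset.comp_sup'_eq_sup'_comp hne Real.sqrt
    (fun x y => Monotone.map_max (fun _ _ h => Real.sqrt_le_sqrt h))]
  refine Finset.sup'_congr hne rfl (fun i _ => ?_)
  obtain ⟨h0, h1⟩ := hlam i
  have habs : |lam i ^ (2*m+1) - lam i ^ (2*m+2)|
      = lam i ^ (2*n-1) * (1 - lam i) := by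
    have he : lam i ^ (2*m+1) - lam i ^ (2*m+2) = lam i ^ (2*m+1) * (1 - lam i) := by
      rw [mul_sub, mul_one, ← pow_succ]
    have hexp : 2*n-1 = 2*m+1 := by omega
    rw [he, hexp, abs_of_nonneg (mul_nonneg (pow_nonneg h0 _) (by linarith))]
  rw [Function.comp_apply, habs]
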